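/- For a sequence s of positive integers with s_1 ≥ 2 and s_r ≥ 2, the multitangent function Te^s(z) = Σ_{-∞ < n_r < ... < n_1 < +∞} ∏ (n_i+z)^{-s_i} factorizes as Te^s(z) = Σ over all decompositions s = s¹·s²·s³ (into beginning, middle, end, possibly empty) with length of s² at most 1, of He_+^{s¹}(z) · Ce^{s²}(z) · He_-^{s³}(z), where Ce^∅ = 1 and Ce^{(t)}(z) = z^{-t}. -/

import Mathlib

/-- Hurwitz multizeta function over positive indices, for a word `l`. -/
noncomputable def HePlus (l : List ℕ) (z : ℂ) : ℂ :=
  ∑' n : {f : Fin l.length → ℕ // StrictAnti f ∧ ∀ i, 0 < f i},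
    ∏ i, (((n.1 i : ℂ) + z) ^ l.get i)⁻¹

/-- Hurwitz multizeta function over negative indices, for a word `l`. -/
noncomputable def HeMinus (l : List ℕ) (z : ℂ) : ℂ :=
  ∑' n : {f : Fin l.length → ℤ // StrictAnti f ∧ ∀ i, f i < 0},
    ∏ i, (((n.1 i : ℂ) + z) ^ l.get i)⁻¹

/-- Multitangent function: bilateral sum over strictly decreasing integer tuples. -/
noncomputable def Te (l : List ℕ) (z : ℂ) : ℂ :=
  ∑' n : {f : Fin l.length → ℤ // StrictAnti f},
    ∏ i, (((n.1 i : ℂ) + z) ^ l.get i)⁻¹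

/-- The correction mould `Ce`. -/
noncomputable def Ce (l : List ℕ) (z : ℂ) : ℂ :=
  match l with
  | [] => 1
  | [t] => (z ^ t)⁻¹
  | _ => 0


lemma exists_lb (z : ℂ) (hz : ∀ n : ℤ, z ≠ (n : ℂ)) :
    ∃ c : ℝ, 0 < c ∧ ∀ n : ℤ, n ≠ 0 → c * |(n : ℝ)| ≤ ‖(n : ℂ) + z‖ := by
  classical
  obtain ⟨N, hNz⟩ : ∃ N : ℕ, 2 * ‖z‖ ≤ (N:ℝ) := ⟨⌈2 * ‖z‖⌉₊, Nat.le_ceil _⟩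
  have key : ∀ n : ℤ, n ≠ 0 → (0:ℝ) < ‖(n:ℂ) + z‖ / |(n:ℝ)| := by
    intro n hn0
    have h1 : (0:ℝ) < ‖(n:ℂ) + z‖ := by
      rw [norm_pos_iff]
      intro hcontra
      refine hz (-n) ?_
      have : z = -(n:ℂ) := by linear_combination hcontra
      rw [this]; push_cast; ring
    have h2 : (0:ℝ) < |(n:ℝ)| := by
      simp only [abs_pos]; exact_mod_cast hn0
    positivity
  set q : ℤ → ℝ := fun n => ‖(n:ℂ) + z‖ / |(n:ℝ)| with hq
  set T : Finset ℝ := insert (1/2 : ℝ) (((Finset.Icc (-(N:ℤ)) N).erase 0).image q) with hT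
  have hTne : T.Nonempty := Finset.insert_nonempty _ _
  refine ⟨T.min' hTne, ?_, ?_⟩
  · rw [Finset.lt_min'_iff]
    intro y hy
    rw [hT, Finset.mem_insert, Finset.mem_image] at hy
    rcases hy with h | ⟨n, hn, rfl⟩
    · rw [h]; norm_num
    · exact key n (Finset.mem_erase.mp hn).1
  · intro n hn
    have h2 : (0:ℝ) < |(n:ℝ)| := by simp only [abs_pos]; exact_mod_cast hn
    by_cases hcase : n ∈ (Finset.Icc (-(N:ℤ)) N).erase 0
    · have hmem : q n ∈ T := by
        rw [hT]; exact Finset.mem_insert_of_mem (Finset.mem_image_of_mem _ hcase)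
      have hle := Finset.min'_le T _ hmem
      calc T.min' hTne * |(n:ℝ)| ≤ q n * |(n:ℝ)| :=
            mul_le_mul_of_nonneg_right hle h2.le
        _ = ‖(n:ℂ) + z‖ := by rw [hq]; field_simp
    · have hbig : (N:ℝ) < |(n:ℝ)| := by
        simp only [Finset.mem_erase, Finset.mem_Icc, not_and, not_le] at hcase
        have h6 := hcase hn
        have h3 : ((N:ℤ):ℝ) < ((|n|:ℤ):ℝ) := by
          have : (N:ℤ) < |n| := by
            rcases abs_cases n with ⟨h4,h5⟩ | ⟨h4,h5⟩ <;> omega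
          exact_mod_cast this
        rwa [Int.cast_abs, Int.cast_natCast] at h3
      have hmin : T.min' hTne ≤ 1/2 := Finset.min'_le T _ (by rw [hT]; exact Finset.mem_insert_self _ _)
      have hnorm : |(n:ℝ)| - ‖z‖ ≤ ‖(n:ℂ) + z‖ := by
        have h := norm_add_le ((n:ℂ) + z) (-z)
        simp only [add_neg_cancel_right, norm_neg] at h
        have h5 : ‖(n:ℂ)‖ = |(n:ℝ)| := by
          rw [show ((n:ℂ)) = ((n:ℝ):ℂ) by push_cast; ring, Complex.norm_real, Real.norm_eq_abs]
        linarith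
      nlinarith [norm_nonneg z]


lemma summable_pi_prod {r : ℕ} (f : Fin r → ℕ → ℝ) (h0 : ∀ i n, 0 ≤ f i n)
    (h : ∀ i, Summable (f i)) :
    Summable fun m : Fin r → ℕ => ∏ i, f i (m i) := by
  induction r with
  | zero =>
    simpa using (Summable.of_finite :
      Summable fun m : Fin 0 → ℕ => ∏ i : Fin 0, f i (m i))
  | succ n ih =>
    have key : Summable fun x : ℕ × (Fin n → ℕ) =>
        f 0 x.1 * ∏ i : Fin n, f i.succ (x.2 i) := by
      apply Summable.mul_of_nonneg (h 0)
        (ih (fun i => f i.succ) (fun i n => h0 _ _) (fun i => h i.succ))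
        (fun n => h0 _ _)
      intro m
      exact Finset.prod_nonneg fun i _ => h0 _ _
    have := ((Fin.consEquiv (fun _ => ℕ)).symm.summable_iff
      (f := fun x : ℕ × (Fin n → ℕ) => f 0 x.1 * ∏ i : Fin n, f i.succ (x.2 i))).mpr key
    -- this : Summable fun m : Fin (n+1) → ℕ => f 0 (m 0) * ∏ i, f i.succ (m i.succ)
    refine this.congr ?_
    intro m
    simp only [Function.comp_apply, Fin.prod_univ_succ]
    rfl

lemma core_summable {r : ℕ} (s : Fin r → ℕ) (hs : ∀ i, 1 ≤ s i)
    (i₀ : Fin r) (h2 : 2 ≤ s i₀) (G : (Fin r → ℕ) → Fin r → ℕ)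
    (hG1 : ∀ m i, m i + 1 ≤ G m i)
    (hG2 : ∀ m j, m j + 1 ≤ G m i₀) :
    Summable fun m : Fin r → ℕ => ∏ i, ((G m i : ℝ) ^ s i)⁻¹ := by
  have hr : 0 < r := i₀.pos
  set p : ℝ := 1 + (r:ℝ)⁻¹ with hp
  have hp1 : 1 < p := by
    rw [hp]
    have : (0:ℝ) < (r:ℝ)⁻¹ := by positivity
    linarith
  have hM : Summable fun m : Fin r → ℕ => ∏ j, (((m j : ℝ) + 1) ^ p)⁻¹ := by
    refine summable_pi_prod (fun _ n => (((n:ℝ) + 1) ^ p)⁻¹) (fun i n => by positivity) ?_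
    intro i
    have h1 : Summable fun n : ℕ => (((n:ℝ)) ^ p)⁻¹ :=
      Real.summable_nat_rpow_inv.mpr hp1
    have := (summable_nat_add_iff 1).mpr h1
    refine this.congr fun n => ?_
    push_cast
    ring_nf
  apply Summable.of_nonneg_of_le _ _ hM
  · intro m
    apply Finset.prod_nonneg
    intro i _
    positivity
  · intro m
    have hGpos : ∀ i, (0:ℝ) < (G m i : ℝ) := by
      intro i
      have := hG1 m i
      exact_mod_cast Nat.lt_of_lt_of_le (Nat.succ_pos _) this
    set X : ℝ := ∏ j, ((m j : ℝ) + 1) with hX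
    have hXpos : 0 < X := Finset.prod_pos fun j _ => by positivity
    have step1 : ∏ i, (((m i : ℝ) + 1) * (if i = i₀ then (G m i₀ : ℝ) else 1))
        ≤ ∏ i, (G m i : ℝ) ^ s i := by
      apply Finset.prod_le_prod
      · intro i _
        have : (0:ℝ) ≤ (G m i₀ : ℝ) := (hGpos i₀).le
        split <;> positivity
      · intro i _
        have hmi : ((m i : ℝ) + 1) ≤ (G m i : ℝ) := by exact_mod_cast hG1 m i
        have h1G : (1:ℝ) ≤ (G m i : ℝ) := by
          have := hG1 m i; exact_mod_cast Nat.le_trans (Nat.succ_le_succ (Nat.zero_le _)) this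
        split
        · rename_i hii
          subst hii
          calc ((m i : ℝ) + 1) * (G m i : ℝ) ≤ (G m i : ℝ) * (G m i : ℝ) := by
                apply mul_le_mul_of_nonneg_right hmi (hGpos i).le
            _ = (G m i : ℝ) ^ 2 := by ring
            _ ≤ (G m i : ℝ) ^ s i := pow_le_pow_right₀ h1G h2
        · calc ((m i : ℝ) + 1) * 1 = ((m i : ℝ) + 1) := mul_one _
            _ ≤ (G m i : ℝ) := hmi
            _ = (G m i : ℝ) ^ 1 := (pow_one _).symm
            _ ≤ (G m i : ℝ) ^ s i := pow_le_pow_right₀ h1G (hs i)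
    have step2 : ∏ i, (((m i : ℝ) + 1) * (if i = i₀ then (G m i₀ : ℝ) else 1))
        = X * (G m i₀ : ℝ) := by
      rw [Finset.prod_mul_distrib, Finset.prod_ite_eq' Finset.univ i₀ fun _ => (G m i₀ : ℝ)]
      simp [hX]
    have step3 : X ^ (r:ℝ)⁻¹ ≤ (G m i₀ : ℝ) := by
      have hXle : X ≤ (G m i₀ : ℝ) ^ r := by
        calc X ≤ ∏ _j : Fin r, (G m i₀ : ℝ) := by
              apply Finset.prod_le_prod
              · intro j _; positivity
              · intro j _; exact_mod_cast hG2 m j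
          _ = (G m i₀ : ℝ) ^ r := by
            rw [Finset.prod_const, Finset.card_univ, Fintype.card_fin]
      calc X ^ (r:ℝ)⁻¹ ≤ ((G m i₀ : ℝ) ^ r) ^ (r:ℝ)⁻¹ :=
            Real.rpow_le_rpow hXpos.le hXle (by positivity)
        _ = (G m i₀ : ℝ) := by
          rw [← Real.rpow_natCast (G m i₀ : ℝ) r, ← Real.rpow_mul (hGpos i₀).le,
            mul_inv_cancel₀ (by exact_mod_cast hr.ne' : ((r:ℕ):ℝ) ≠ 0), Real.rpow_one]
    have hprod_pos : (0:ℝ) < ∏ i, (G m i : ℝ) ^ s i :=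
      Finset.prod_pos fun i _ => pow_pos (hGpos i) _
    have hrhs : ∏ j, (((m j : ℝ) + 1) ^ p)⁻¹ = (X * X ^ (r:ℝ)⁻¹)⁻¹ := by
      rw [Finset.prod_inv_distrib]
      congr 1
      have : ∀ j : Fin r, ((m j : ℝ) + 1) ^ p = ((m j : ℝ) + 1) * ((m j : ℝ) + 1) ^ (r:ℝ)⁻¹ := by
        intro j
        rw [hp, Real.rpow_add (by positivity), Real.rpow_one]
      rw [Finset.prod_congr rfl fun j _ => this j, Finset.prod_mul_distrib,
        Real.finset_prod_rpow _ _ (fun j _ => by positivity)]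
    rw [Finset.prod_inv_distrib, hrhs]
    have hfin : X * X ^ (r:ℝ)⁻¹ ≤ ∏ i, (G m i : ℝ) ^ s i := by
      have h9 : X * X ^ (r:ℝ)⁻¹ ≤ X * (G m i₀ : ℝ) :=
        mul_le_mul_of_nonneg_left step3 hXpos.le
      exact le_trans h9 (le_of_le_of_eq (le_of_eq step2.symm) rfl |>.trans step1)
    have hX2 : (0:ℝ) < X * X ^ (r:ℝ)⁻¹ :=
      mul_pos hXpos (Real.rpow_pos_of_pos hXpos _)
    exact inv_anti₀ hX2 hfin


def tePay (r : ℕ) (m : Fin r → ℕ) (j : ℕ) : ℕ := (if h : j < r then m ⟨j, h⟩ else 0) + 1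

def teGp (r : ℕ) (m : Fin r → ℕ) (i : Fin r) : ℕ := ∑ j ∈ Finset.Ico (i:ℕ) r, tePay r m j

lemma teGp_ge (r : ℕ) (m : Fin r → ℕ) (i : Fin r) : m i + 1 ≤ teGp r m i := by
  have hmem : (i:ℕ) ∈ Finset.Ico (i:ℕ) r := Finset.mem_Ico.mpr ⟨le_refl _, i.2⟩
  have := Finset.single_le_sum (f := tePay r m) (fun j _ => Nat.zero_le _) hmem
  rwa [tePay, dif_pos i.2, Fin.eta] at this

lemma teGp_ge_all (r : ℕ) (hr : 0 < r) (m : Fin r → ℕ) (j : Fin r) :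
    m j + 1 ≤ teGp r m ⟨0, hr⟩ := by
  have hmem : (j:ℕ) ∈ Finset.Ico (0:ℕ) r := Finset.mem_Ico.mpr ⟨Nat.zero_le _, j.2⟩
  have := Finset.single_le_sum (f := tePay r m) (fun j _ => Nat.zero_le _) hmem
  rwa [tePay, dif_pos j.2, Fin.eta] at this

lemma teGp_strictAnti (r : ℕ) (m : Fin r → ℕ) : StrictAnti (teGp r m) := by
  intro i i' h
  apply Finset.sum_lt_sum_of_subset (i := (i:ℕ))
  · apply Finset.Ico_subset_Ico_left
    exact_mod_cast h.le
  · exact Finset.mem_Ico.mpr ⟨le_refl _, i.2⟩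
  · rw [Finset.mem_Ico]
    push_neg
    intro hcon
    exact absurd hcon (by exact_mod_cast Nat.not_le.mpr h)
  · exact Nat.succ_le_succ (Nat.zero_le _)
  · intro j _ _
    exact Nat.zero_le _

lemma teGp_pos (r : ℕ) (m : Fin r → ℕ) (i : Fin r) : 0 < teGp r m i :=
  Nat.lt_of_lt_of_le (Nat.succ_pos _) (teGp_ge r m i)

def tePlusMap (r : ℕ) (m : Fin r → ℕ) :
    {f : Fin r → ℕ // StrictAnti f ∧ ∀ i, 0 < f i} :=
  ⟨teGp r m, teGp_strictAnti r m, teGp_pos r m⟩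

lemma tePlusMap_bijective (r : ℕ) : Function.Bijective (tePlusMap r) := by
  constructor
  · intro m m' h
    have hG : ∀ i : Fin r, teGp r m i = teGp r m' i :=
      fun i => congrFun (congrArg Subtype.val h) i
    funext i
    obtain ⟨k, hk⟩ := i
    have h1 := hG ⟨k, hk⟩
    rw [teGp, teGp] at h1
    simp only at h1
    rw [Finset.sum_eq_sum_Ico_succ_bot hk, Finset.sum_eq_sum_Ico_succ_bot hk] at h1
    have htail : ∑ j ∈ Finset.Ico (k+1) r, tePay r m j
        = ∑ j ∈ Finset.Ico (k+1) r, tePay r m' j := by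
      by_cases hk1 : k + 1 < r
      · exact hG ⟨k+1, hk1⟩
      · rw [Finset.Ico_eq_empty (by omega), Finset.sum_empty, Finset.sum_empty]
    have hpay : tePay r m k = tePay r m' k := by omega
    rw [tePay, tePay, dif_pos hk, dif_pos hk] at hpay
    omega
  · rintro ⟨g, hg, hgpos⟩
    classical
    set m : Fin r → ℕ := fun i =>
      if h : (i:ℕ) + 1 < r then g i - g ⟨(i:ℕ)+1, h⟩ - 1 else g i - 1 with hm
    have claim : ∀ d k (hk : k < r), r - k = d + 1 → teGp r m ⟨k, hk⟩ = g ⟨k, hk⟩ := by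
      intro d
      induction d with
      | zero =>
        intro k hk hd
        have hk1 : ¬ (k + 1 < r) := by omega
        rw [teGp]
        simp only
        rw [Finset.sum_eq_sum_Ico_succ_bot hk, Finset.Ico_eq_empty (by omega),
          Finset.sum_empty, tePay, dif_pos hk]
        have hm1 : m ⟨k, hk⟩ = g ⟨k, hk⟩ - 1 := by
          rw [hm]; simp only; rw [dif_neg hk1]
        have := hgpos ⟨k, hk⟩
        omega
      | succ d ih =>
        intro k hk hd
        have hk1 : k + 1 < r := by omega
        rw [teGp]
        simp only
        rw [Finset.sum_eq_sum_Ico_succ_bot hk]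
        have ht : ∑ j ∈ Finset.Ico (k+1) r, tePay r m j = teGp r m ⟨k+1, hk1⟩ := rfl
        rw [ht, ih (k+1) hk1 (by omega), tePay, dif_pos hk]
        have hlt : g ⟨k+1, hk1⟩ < g ⟨k, hk⟩ := hg (by simp [Fin.lt_def])
        have hm1 : m ⟨k, hk⟩ = g ⟨k, hk⟩ - g ⟨k+1, hk1⟩ - 1 := by
          rw [hm]; simp only; rw [dif_pos hk1]
        omega
    refine ⟨m, Subtype.ext (funext fun i => ?_)⟩
    obtain ⟨k, hk⟩ := i
    exact claim (r - k - 1) k hk (by omega)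

noncomputable def ePlus (r : ℕ) : (Fin r → ℕ) ≃ {f : Fin r → ℕ // StrictAnti f ∧ ∀ i, 0 < f i} :=
  Equiv.ofBijective _ (tePlusMap_bijective r)

lemma ePlus_apply (r : ℕ) (m : Fin r → ℕ) (i : Fin r) : ((ePlus r m : {f : Fin r → ℕ // StrictAnti f ∧ ∀ i, 0 < f i}) : Fin r → ℕ) i = teGp r m i := rfl


def teGm (r : ℕ) (m : Fin r → ℕ) (i : Fin r) : ℕ := ∑ j ∈ Finset.range ((i:ℕ)+1), tePay r m j

lemma tePay_eq (r : ℕ) (m : Fin r → ℕ) (j : ℕ) (h : j < r) : tePay r m j = m ⟨j, h⟩ + 1 := by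
  rw [tePay, dif_pos h]

lemma teGm_ge (r : ℕ) (m : Fin r → ℕ) (i : Fin r) : m i + 1 ≤ teGm r m i := by
  have hmem : (i:ℕ) ∈ Finset.range ((i:ℕ)+1) := Finset.mem_range.mpr (Nat.lt_succ_self _)
  have := Finset.single_le_sum (f := tePay r m) (fun j _ => Nat.zero_le _) hmem
  rwa [tePay_eq r m i i.2, Fin.eta] at this

lemma teGm_ge_all (r : ℕ) (hr : 0 < r) (m : Fin r → ℕ) (j : Fin r) :
    m j + 1 ≤ teGm r m ⟨r - 1, by omega⟩ := by
  have hmem : (j:ℕ) ∈ Finset.range ((r-1)+1) := Finset.mem_range.mpr (by have := j.2; omega)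
  have := Finset.single_le_sum (f := tePay r m) (fun j _ => Nat.zero_le _) hmem
  rwa [tePay_eq r m j j.2, Fin.eta] at this

lemma teGm_strictMono (r : ℕ) (m : Fin r → ℕ) : StrictMono (teGm r m) := by
  intro i i' h
  apply Finset.sum_lt_sum_of_subset (i := (i':ℕ))
  · apply Finset.range_subset_range.mpr
    have : (i:ℕ) < (i':ℕ) := h
    omega
  · exact Finset.mem_range.mpr (Nat.lt_succ_self _)
  · rw [Finset.mem_range]
    have : (i:ℕ) < (i':ℕ) := h
    omega
  · exact Nat.succ_le_succ (Nat.zero_le _)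
  · intro j _ _
    exact Nat.zero_le _

def teMinusMap (r : ℕ) (m : Fin r → ℕ) :
    {f : Fin r → ℤ // StrictAnti f ∧ ∀ i, f i < 0} :=
  ⟨fun i => -(teGm r m i : ℤ),
   fun i i' h => by
     simp only [neg_lt_neg_iff]
     exact_mod_cast teGm_strictMono r m h,
   fun i => by
     have := Nat.lt_of_lt_of_le (Nat.succ_pos _) (teGm_ge r m i)
     simp only [neg_neg, Left.neg_neg_iff]
     exact_mod_cast this⟩

lemma teMinusMap_bijective (r : ℕ) : Function.Bijective (teMinusMap r) := by
  constructor
  · intro m m' h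
    have hG : ∀ i : Fin r, teGm r m i = teGm r m' i := by
      intro i
      have := congrFun (congrArg Subtype.val h) i
      simp only [teMinusMap, neg_inj] at this
      exact_mod_cast this
    funext i
    obtain ⟨k, hk⟩ := i
    cases k with
    | zero =>
      have h1 := hG ⟨0, hk⟩
      have e1 : teGm r m ⟨0, hk⟩ = tePay r m 0 := Finset.sum_range_one (f := tePay r m)
      have e1' : teGm r m' ⟨0, hk⟩ = tePay r m' 0 := Finset.sum_range_one (f := tePay r m')
      rw [e1, e1', tePay_eq r m 0 hk, tePay_eq r m' 0 hk] at h1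
      omega
    | succ k' =>
      have h1 := hG ⟨k'+1, hk⟩
      have h0 := hG ⟨k', by omega⟩
      have e1 : teGm r m ⟨k'+1, hk⟩
          = ∑ j ∈ Finset.range (k'+1), tePay r m j + tePay r m (k'+1) :=
        Finset.sum_range_succ _ _
      have e1' : teGm r m' ⟨k'+1, hk⟩
          = ∑ j ∈ Finset.range (k'+1), tePay r m' j + tePay r m' (k'+1) :=
        Finset.sum_range_succ _ _
      have e0 : teGm r m ⟨k', by omega⟩ = ∑ j ∈ Finset.range (k'+1), tePay r m j := rfl
      have e0' : teGm r m' ⟨k', by omega⟩ = ∑ j ∈ Finset.range (k'+1), tePay r m' j := rfl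
      rw [e1, e1'] at h1
      rw [e0, e0'] at h0
      have hpay : tePay r m (k'+1) = tePay r m' (k'+1) := by omega
      rw [tePay_eq r m (k'+1) hk, tePay_eq r m' (k'+1) hk] at hpay
      omega
  · rintro ⟨g, hg, hgneg⟩
    classical
    set m : Fin r → ℕ := fun i =>
      if h : 0 < (i:ℕ) then (g ⟨(i:ℕ)-1, by have := i.2; omega⟩ - g i - 1).toNat
      else (-g i - 1).toNat with hm
    have claim : ∀ k (hk : k < r), (teGm r m ⟨k, hk⟩ : ℤ) = -g ⟨k, hk⟩ := by
      intro k
      induction k with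
      | zero =>
        intro hk
        show ((∑ j ∈ Finset.range (0+1), tePay r m j : ℕ) : ℤ) = -g ⟨0, hk⟩
        rw [Finset.sum_range_one, tePay_eq r m 0 hk]
        have hm1 : m ⟨0, hk⟩ = (-g ⟨0, hk⟩ - 1).toNat := by rw [hm]; simp
        have hneg := hgneg ⟨0, hk⟩
        rw [hm1]
        push_cast [Int.toNat_of_nonneg (by omega : (0:ℤ) ≤ -g ⟨0, hk⟩ - 1)]
        ring
      | succ k' ih =>
        intro hk
        have hk' : k' < r := by omega
        have hlt : g ⟨k'+1, hk⟩ < g ⟨k', hk'⟩ := hg (by simp [Fin.lt_def])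
        have hm1 : m ⟨k'+1, hk⟩ = (g ⟨k', hk'⟩ - g ⟨k'+1, hk⟩ - 1).toNat := by
          rw [hm]
          simp
        have hpay : (tePay r m (k'+1) : ℤ) = g ⟨k', hk'⟩ - g ⟨k'+1, hk⟩ := by
          rw [tePay_eq r m (k'+1) hk, hm1]
          push_cast [Int.toNat_of_nonneg (by omega : (0:ℤ) ≤ g ⟨k', hk'⟩ - g ⟨k'+1, hk⟩ - 1)]
          ring
        have ht : teGm r m ⟨k', hk'⟩ = ∑ j ∈ Finset.range (k'+1), tePay r m j := rfl
        show ((∑ j ∈ Finset.range (k'+1+1), tePay r m j : ℕ) : ℤ) = -g ⟨k'+1, hk⟩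
        rw [Finset.sum_range_succ]
        push_cast
        rw [← Nat.cast_sum, ← ht, ih hk']
        push_cast [hpay]
        ring
    refine ⟨m, Subtype.ext (funext fun i => ?_)⟩
    obtain ⟨k, hk⟩ := i
    show -(teGm r m ⟨k, hk⟩ : ℤ) = g ⟨k, hk⟩
    rw [claim k hk]
    ring

noncomputable def eMinus (r : ℕ) : (Fin r → ℕ) ≃ {f : Fin r → ℤ // StrictAnti f ∧ ∀ i, f i < 0} :=
  Equiv.ofBijective _ (teMinusMap_bijective r)

lemma summable_plus (l : List ℕ) (h1 : ∀ x ∈ l, 1 ≤ x)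
    (hh : ∀ h0 : 0 < l.length, 2 ≤ l.get ⟨0, h0⟩)
    (z : ℂ) (hz : ∀ n : ℤ, z ≠ (n : ℂ)) :
    Summable fun n : {f : Fin l.length → ℕ // StrictAnti f ∧ ∀ i, 0 < f i} =>
      ‖∏ i, (((n.1 i : ℂ) + z) ^ l.get i)⁻¹‖ := by
  rcases Nat.eq_zero_or_pos l.length with hr | hr
  · haveI : Subsingleton {f : Fin l.length → ℕ // StrictAnti f ∧ ∀ i, 0 < f i} := by
      constructor
      intro a b
      apply Subtype.ext; funext i; exact absurd i.2 (by omega)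
    haveI := Finite.of_subsingleton
      (α := {f : Fin l.length → ℕ // StrictAnti f ∧ ∀ i, 0 < f i})
    exact Summable.of_finite
  · obtain ⟨c, hc0, hc⟩ := exists_lb z hz
    set c' := min c 1 with hc'
    have hc'0 : 0 < c' := lt_min hc0 one_pos
    have hlb : ∀ k : ℕ, 0 < k → c' * k ≤ ‖((k:ℂ)) + z‖ := by
      intro k hk
      have h5 := hc (k : ℤ) (by exact_mod_cast hk.ne')
      rw [show ((k:ℤ):ℂ) = (k:ℂ) by push_cast; rfl] at h5
      rw [show |((k:ℤ):ℝ)| = (k:ℝ) by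
        rw [Int.cast_natCast]; exact abs_of_nonneg (Nat.cast_nonneg k)] at h5
      have h6 : c' * (k:ℝ) ≤ c * (k:ℝ) :=
        mul_le_mul_of_nonneg_right (min_le_left _ _) (Nat.cast_nonneg k)
      linarith
    have hreal : Summable fun n : {f : Fin l.length → ℕ // StrictAnti f ∧ ∀ i, 0 < f i} =>
        ∏ i, ((n.1 i : ℝ) ^ l.get i)⁻¹ := by
      rw [← (ePlus l.length).summable_iff]
      have hcomp : ((fun n : {f : Fin l.length → ℕ // StrictAnti f ∧ ∀ i, 0 < f i} =>
          ∏ i, ((n.1 i : ℝ) ^ l.get i)⁻¹) ∘ (ePlus l.length))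
          = fun m => ∏ i, ((teGp l.length m i : ℝ) ^ l.get i)⁻¹ := rfl
      rw [hcomp]
      exact core_summable (fun i => l.get i) (fun i => h1 _ (l.get_mem ..)) ⟨0, hr⟩ (hh hr)
        (teGp l.length) (fun m i => teGp_ge _ m i) (fun m j => teGp_ge_all _ hr m j)
    set C := ∏ i : Fin l.length, (c' ^ l.get i)⁻¹ with hC
    apply Summable.of_nonneg_of_le (fun n => norm_nonneg _) _ (hreal.mul_left C)
    intro n
    rw [norm_prod]
    calc ∏ i, ‖(((n.1 i : ℂ) + z) ^ l.get i)⁻¹‖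
        ≤ ∏ i, ((c' ^ l.get i)⁻¹ * ((n.1 i : ℝ) ^ l.get i)⁻¹) := by
          apply Finset.prod_le_prod (fun i _ => norm_nonneg _)
          intro i _
          rw [norm_inv, norm_pow]
          have hpos := n.2.2 i
          have hposR : (0:ℝ) < (n.1 i : ℝ) := by exact_mod_cast hpos
          have hle : c' * (n.1 i : ℝ) ≤ ‖((n.1 i : ℂ)) + z‖ := hlb _ hpos
          have h2 : (c' * (n.1 i:ℝ)) ^ l.get i ≤ ‖(n.1 i : ℂ) + z‖ ^ l.get i :=
            pow_le_pow_left₀ (by positivity) hle _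
          have h3 : 0 < (c' * (n.1 i:ℝ)) ^ l.get i := pow_pos (mul_pos hc'0 hposR) _
          calc (‖(n.1 i : ℂ) + z‖ ^ l.get i)⁻¹ ≤ ((c' * (n.1 i:ℝ)) ^ l.get i)⁻¹ :=
                inv_anti₀ h3 h2
            _ = (c' ^ l.get i)⁻¹ * ((n.1 i : ℝ) ^ l.get i)⁻¹ := by
                rw [mul_pow, mul_inv]
      _ = C * ∏ i, ((n.1 i : ℝ) ^ l.get i)⁻¹ := Finset.prod_mul_distrib

lemma summable_minus (l : List ℕ) (h1 : ∀ x ∈ l, 1 ≤ x)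
    (hh : ∀ h0 : 0 < l.length, 2 ≤ l.get ⟨l.length - 1, by omega⟩)
    (z : ℂ) (hz : ∀ n : ℤ, z ≠ (n : ℂ)) :
    Summable fun n : {f : Fin l.length → ℤ // StrictAnti f ∧ ∀ i, f i < 0} =>
      ‖∏ i, (((n.1 i : ℂ) + z) ^ l.get i)⁻¹‖ := by
  rcases Nat.eq_zero_or_pos l.length with hr | hr
  · haveI : Subsingleton {f : Fin l.length → ℤ // StrictAnti f ∧ ∀ i, f i < 0} := by
      constructor
      intro a b
      apply Subtype.ext; funext i; exact absurd i.2 (by omega)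
    haveI := Finite.of_subsingleton
      (α := {f : Fin l.length → ℤ // StrictAnti f ∧ ∀ i, f i < 0})
    exact Summable.of_finite
  · obtain ⟨c, hc0, hc⟩ := exists_lb z hz
    set c' := min c 1 with hc'
    have hc'0 : 0 < c' := lt_min hc0 one_pos
    have hlb : ∀ a : ℤ, a < 0 → c' * (-(a:ℝ)) ≤ ‖((a:ℂ)) + z‖ := by
      intro a ha
      have h5 := hc a (by omega)
      rw [show |((a:ℤ):ℝ)| = -(a:ℝ) by
        rw [abs_of_nonpos]; exact_mod_cast ha.le] at h5
      have h6 : c' * (-(a:ℝ)) ≤ c * (-(a:ℝ)) := by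
        apply mul_le_mul_of_nonneg_right (min_le_left _ _)
        simp only [Left.nonneg_neg_iff]
        exact_mod_cast ha.le
      linarith
    have hreal : Summable fun n : {f : Fin l.length → ℤ // StrictAnti f ∧ ∀ i, f i < 0} =>
        ∏ i, ((-(n.1 i : ℝ)) ^ l.get i)⁻¹ := by
      rw [← (eMinus l.length).summable_iff]
      have hcore := core_summable (fun i => l.get i) (fun i => h1 _ (l.get_mem ..))
        ⟨l.length - 1, by omega⟩ (hh hr)
        (teGm l.length) (fun m i => teGm_ge _ m i) (fun m j => teGm_ge_all _ hr m j)
      apply hcore.congr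
      intro m
      simp only [Function.comp_apply]
      apply Finset.prod_congr rfl
      intro i _
      congr 2
      show ((teGm l.length m i : ℕ) : ℝ) = -(((-(teGm l.length m i : ℤ)) : ℤ) : ℝ)
      push_cast
      ring
    set C := ∏ i : Fin l.length, (c' ^ l.get i)⁻¹ with hC
    apply Summable.of_nonneg_of_le (fun n => norm_nonneg _) _ (hreal.mul_left C)
    intro n
    rw [norm_prod]
    calc ∏ i, ‖(((n.1 i : ℂ) + z) ^ l.get i)⁻¹‖
        ≤ ∏ i, ((c' ^ l.get i)⁻¹ * ((-(n.1 i : ℝ)) ^ l.get i)⁻¹) := by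
          apply Finset.prod_le_prod (fun i _ => norm_nonneg _)
          intro i _
          rw [norm_inv, norm_pow]
          have hneg := n.2.2 i
          have hposR : (0:ℝ) < -(n.1 i : ℝ) := by
            rw [neg_pos]
            exact_mod_cast hneg
          have hle : c' * (-(n.1 i : ℝ)) ≤ ‖((n.1 i : ℂ)) + z‖ := hlb _ hneg
          have h2 : (c' * (-(n.1 i:ℝ))) ^ l.get i ≤ ‖(n.1 i : ℂ) + z‖ ^ l.get i :=
            pow_le_pow_left₀ (by positivity) hle _
          have h3 : 0 < (c' * (-(n.1 i:ℝ))) ^ l.get i := pow_pos (mul_pos hc'0 hposR) _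
          calc (‖(n.1 i : ℂ) + z‖ ^ l.get i)⁻¹ ≤ ((c' * (-(n.1 i:ℝ))) ^ l.get i)⁻¹ :=
                inv_anti₀ h3 h2
            _ = (c' ^ l.get i)⁻¹ * ((-(n.1 i : ℝ)) ^ l.get i)⁻¹ := by
                rw [mul_pow, mul_inv]
      _ = C * ∏ i, ((-(n.1 i : ℝ)) ^ l.get i)⁻¹ := Finset.prod_mul_distrib

lemma seg_lemma {r : ℕ} (S : Finset (Fin r))
    (hdown : ∀ i j : Fin r, i ≤ j → j ∈ S → i ∈ S) :
    ∀ i : Fin r, i ∈ S ↔ (i:ℕ) < S.card := by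
  intro i
  constructor
  · intro hi
    have hsub : Finset.Iic i ⊆ S := fun j hj => hdown j i (Finset.mem_Iic.mp hj) hi
    have := Finset.card_le_card hsub
    rw [Fin.card_Iic] at this
    omega
  · intro hi
    by_contra hni
    have hsub : S ⊆ Finset.Iio i := by
      intro j hj
      rw [Finset.mem_Iio]
      by_contra hji
      push_neg at hji
      exact hni (hdown i j hji hj)
    have := Finset.card_le_card hsub
    rw [Fin.card_Iio] at this
    omega

def tePairs (l : List ℕ) : Finset (ℕ × ℕ) :=
  (Finset.range (l.length + 1) ×ˢ Finset.range (l.length + 1)).filter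
    (fun p => p.1 ≤ p.2 ∧ p.2 ≤ p.1 + 1)

lemma mem_tePairs {l : List ℕ} {x : ℕ × ℕ} :
    x ∈ tePairs l ↔ x.1 ≤ x.2 ∧ x.2 ≤ x.1 + 1 ∧ x.1 ≤ l.length ∧ x.2 ≤ l.length := by
  simp only [tePairs, Finset.mem_filter, Finset.mem_product, Finset.mem_range]
  omega

abbrev PlusT (l₁ : List ℕ) := {f : Fin l₁.length → ℕ // StrictAnti f ∧ ∀ i, 0 < f i}
abbrev MinusT (l₁ : List ℕ) := {f : Fin l₁.length → ℤ // StrictAnti f ∧ ∀ i, f i < 0}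
abbrev TeT (l : List ℕ) := {f : Fin l.length → ℤ // StrictAnti f}

abbrev teST (l : List ℕ) :=
  (p : {x : ℕ × ℕ // x ∈ tePairs l}) × (PlusT (l.take p.1.1) × MinusT (l.drop p.1.2))

def tePhiFun (l : List ℕ) (x : teST l) : Fin l.length → ℤ := fun i =>
  if h1 : (i:ℕ) < x.1.1.1 then
    (x.2.1.1 ⟨(i:ℕ), by
      rw [List.length_take]
      have hm := mem_tePairs.mp x.1.2
      omega⟩ : ℤ)
  else if h2 : (i:ℕ) < x.1.1.2 then 0
  else x.2.2.1 ⟨(i:ℕ) - x.1.1.2, by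
    rw [List.length_drop]
    have hm := mem_tePairs.mp x.1.2
    have := i.2
    omega⟩

lemma tePhiFun_pos (l : List ℕ) (x : teST l) (i : Fin l.length) (h : (i:ℕ) < x.1.1.1) :
    0 < tePhiFun l x i := by
  rw [tePhiFun, dif_pos h]
  exact_mod_cast x.2.1.2.2 _

lemma tePhiFun_zero (l : List ℕ) (x : teST l) (i : Fin l.length)
    (h : ¬ (i:ℕ) < x.1.1.1) (h' : (i:ℕ) < x.1.1.2) :
    tePhiFun l x i = 0 := by
  rw [tePhiFun, dif_neg h, dif_pos h']

lemma tePhiFun_neg (l : List ℕ) (x : teST l) (i : Fin l.length)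
    (h : ¬ (i:ℕ) < x.1.1.1) (h' : ¬ (i:ℕ) < x.1.1.2) :
    tePhiFun l x i < 0 := by
  rw [tePhiFun, dif_neg h, dif_neg h']
  exact x.2.2.2.2 _

lemma tePhiFun_strictAnti (l : List ℕ) (x : teST l) : StrictAnti (tePhiFun l x) := by
  intro i j hij
  have hm := mem_tePairs.mp x.1.2
  have hijn : (i:ℕ) < (j:ℕ) := hij
  by_cases hja : (j:ℕ) < x.1.1.1
  · -- both in g region
    have hia : (i:ℕ) < x.1.1.1 := by omega
    rw [tePhiFun, tePhiFun, dif_pos hia, dif_pos hja]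
    have hlt2 : (⟨(i:ℕ), by rw [List.length_take]; omega⟩ : Fin ((l.take x.1.1.1).length))
        < ⟨(j:ℕ), by rw [List.length_take]; omega⟩ := by
      simp only [Fin.mk_lt_mk]
      omega
    have := x.2.1.2.1 hlt2
    exact_mod_cast this
  · by_cases hia : (i:ℕ) < x.1.1.1
    · -- i in g region, j in zero or neg region
      have hpos := tePhiFun_pos l x i hia
      by_cases hjb : (j:ℕ) < x.1.1.2
      · rw [tePhiFun_zero l x j hja hjb]; exact hpos
      · exact lt_trans (tePhiFun_neg l x j hja hjb) hpos
    · by_cases hib : (i:ℕ) < x.1.1.2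
      · -- i in zero region, j in zero or neg region
        rw [tePhiFun_zero l x i hia hib]
        by_cases hjb : (j:ℕ) < x.1.1.2
        · -- both zero: impossible since b ≤ a+1
          exfalso; omega
        · exact tePhiFun_neg l x j hja hjb
      · -- both in neg region
        have hjb : ¬ (j:ℕ) < x.1.1.2 := by omega
        rw [tePhiFun, tePhiFun, dif_neg hia, dif_neg hib, dif_neg hja, dif_neg hjb]
        apply x.2.2.2.1
        simp only [Fin.lt_def]
        omega

def tePhi (l : List ℕ) (x : teST l) : TeT l := ⟨tePhiFun l x, tePhiFun_strictAnti l x⟩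

lemma teSplit (l : List ℕ) (z : ℂ) (x : teST l) :
    (∏ i, (((tePhiFun l x i : ℂ) + z) ^ l.get i)⁻¹)
      = (∏ i, (((x.2.1.1 i : ℂ) + z) ^ (l.take x.1.1.1).get i)⁻¹)
        * Ce ((l.drop x.1.1.1).take (x.1.1.2 - x.1.1.1)) z
        * (∏ i, (((x.2.2.1 i : ℂ) + z) ^ (l.drop x.1.1.2).get i)⁻¹) := by
  classical
  obtain ⟨⟨⟨a, b⟩, hp⟩, g, h⟩ := x
  have hm := mem_tePairs.mp hp
  simp only at hm ⊢
  set r := l.length with hr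
  set x' : teST l := ⟨⟨⟨a, b⟩, hp⟩, g, h⟩ with hx'
  set w : ℕ → ℂ := fun k => if hk : k < r then
      (((tePhiFun l x' ⟨k, hk⟩ : ℂ) + z) ^ l.get ⟨k, hk⟩)⁻¹ else 1 with hw
  have h0 : ∀ i : Fin r, (((tePhiFun l x' i : ℂ) + z) ^ l.get i)⁻¹ = w (i:ℕ) := by
    intro i
    rw [hw]
    simp only
    rw [dif_pos i.2, Fin.eta]
  have hTot : ∏ i : Fin r, (((tePhiFun l x' i : ℂ) + z) ^ l.get i)⁻¹
      = ∏ k ∈ Finset.range r, w k := by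
    rw [← Fin.prod_univ_eq_prod_range w r]
    exact Finset.prod_congr rfl (fun i _ => h0 i)
  have hsplit : ∏ k ∈ Finset.range r, w k
      = (∏ k ∈ Finset.Ico 0 a, w k) * (∏ k ∈ Finset.Ico a b, w k)
        * (∏ k ∈ Finset.Ico b r, w k) := by
    rw [Finset.range_eq_Ico,
      ← Finset.prod_Ico_consecutive w (Nat.zero_le b) hm.2.2.2,
      ← Finset.prod_Ico_consecutive w (Nat.zero_le a) hm.1]
  have hlenA : (l.take a).length = a := by rw [List.length_take]; omega
  have hpc1 : ∏ k ∈ Finset.Ico 0 a, w k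
      = ∏ i, (((g.1 i : ℂ) + z) ^ (l.take a).get i)⁻¹ := by
    set wA : ℕ → ℂ := fun k => if hk : k < (l.take a).length then
        (((g.1 ⟨k, hk⟩ : ℂ) + z) ^ (l.take a).get ⟨k, hk⟩)⁻¹ else 1 with hwA
    have h1 : ∏ i, (((g.1 i : ℂ) + z) ^ (l.take a).get i)⁻¹
        = ∏ k ∈ Finset.range ((l.take a).length), wA k := by
      rw [← Fin.prod_univ_eq_prod_range wA]
      apply Finset.prod_congr rfl
      intro i _
      rw [hwA]
      simp only
      rw [dif_pos i.2, Fin.eta]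
    rw [h1, hlenA, ← Finset.range_eq_Ico]
    apply Finset.prod_congr rfl
    intro k hk
    rw [Finset.mem_range] at hk
    have hkr : k < r := by omega
    rw [hw, hwA]
    simp only
    rw [dif_pos hkr, dif_pos (show k < (l.take a).length by omega)]
    rw [tePhiFun]
    simp only
    rw [dif_pos (show ((⟨k, hkr⟩ : Fin r) : ℕ) < x'.1.1.1 from hk)]
    simp [hx', List.get_eq_getElem, List.getElem_take]
    rfl
  have hpc3 : ∏ k ∈ Finset.Ico b r, w k
      = ∏ i, (((h.1 i : ℂ) + z) ^ (l.drop b).get i)⁻¹ := by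
    have hlenB : (l.drop b).length = r - b := by rw [List.length_drop]
    set wB : ℕ → ℂ := fun k => if hk : k < (l.drop b).length then
        (((h.1 ⟨k, hk⟩ : ℂ) + z) ^ (l.drop b).get ⟨k, hk⟩)⁻¹ else 1 with hwB
    have h1 : ∏ i, (((h.1 i : ℂ) + z) ^ (l.drop b).get i)⁻¹
        = ∏ k ∈ Finset.range ((l.drop b).length), wB k := by
      rw [← Fin.prod_univ_eq_prod_range wB]
      apply Finset.prod_congr rfl
      intro i _
      rw [hwB]
      simp only
      rw [dif_pos i.2, Fin.eta]
    rw [h1, hlenB, Finset.prod_Ico_eq_prod_range]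
    apply Finset.prod_congr rfl
    intro k hk
    rw [Finset.mem_range] at hk
    have hkr : b + k < r := by omega
    rw [hw, hwB]
    simp only
    rw [dif_pos hkr, dif_pos (show k < (l.drop b).length by omega)]
    rw [tePhiFun]
    simp only
    rw [dif_neg (show ¬ ((⟨b + k, hkr⟩ : Fin r) : ℕ) < x'.1.1.1 from by
        simp only [hx', Fin.val_mk]; omega),
      dif_neg (show ¬ ((⟨b + k, hkr⟩ : Fin r) : ℕ) < x'.1.1.2 from by
        simp only [hx', Fin.val_mk]; omega)]
    simp [hx', List.get_eq_getElem, List.getElem_drop, Nat.add_sub_cancel_left]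
    rfl
  have hpc2 : ∏ k ∈ Finset.Ico a b, w k = Ce ((l.drop a).take (b - a)) z := by
    have hb' : b = a ∨ b = a + 1 := by omega
    rcases hb' with h2 | h2
    · rw [h2, Finset.Ico_self, Finset.prod_empty, Nat.sub_self, List.take_zero]
      rfl
    · subst h2
      have har : a < r := by omega
      have hsing : Finset.Ico a (a+1) = {a} := Nat.Ico_succ_singleton a
      rw [hsing, Finset.prod_singleton, hw]
      simp only
      rw [dif_pos har, tePhiFun]
      simp only
      rw [dif_neg (show ¬ ((⟨a, har⟩ : Fin r) : ℕ) < x'.1.1.1 from by simp [hx']),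
        dif_pos (show ((⟨a, har⟩ : Fin r) : ℕ) < x'.1.1.2 from by simp [hx'])]
      have hword : (l.drop a).take (a + 1 - a) = [l.get ⟨a, har⟩] := by
        rw [show a + 1 - a = 1 by omega]
        rw [← List.getElem_cons_drop (as := l) (i := a) har, List.take_succ_cons, List.take_zero,
          List.get_eq_getElem]
      rw [hword]
      have hCe : Ce [l.get ⟨a, har⟩] z = (z ^ l.get ⟨a, har⟩)⁻¹ := rfl
      rw [hCe]
      norm_num
  calc ∏ i : Fin r, (((tePhiFun l x' i : ℂ) + z) ^ l.get i)⁻¹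
      = ∏ k ∈ Finset.range r, w k := hTot
    _ = (∏ k ∈ Finset.Ico 0 a, w k) * (∏ k ∈ Finset.Ico a b, w k)
        * (∏ k ∈ Finset.Ico b r, w k) := hsplit
    _ = _ := by rw [hpc1, hpc2, hpc3]

lemma take_idx {α : Type*} {l : List α} {a : ℕ} (i : Fin ((l.take a).length)) :
    (i:ℕ) < a ∧ (i:ℕ) < l.length := by
  have h := i.2
  have h2 : (l.take a).length = min a l.length := List.length_take
  omega

lemma drop_idx {α : Type*} {l : List α} {b : ℕ} (j : Fin ((l.drop b).length)) :
    b + (j:ℕ) < l.length := by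
  have h := j.2
  have h2 : (l.drop b).length = l.length - b := List.length_drop
  omega

lemma char_eq_nat {r : ℕ} (Q : Fin r → Prop) {a a' : ℕ} (ha : a ≤ r) (ha' : a' ≤ r)
    (hc : ∀ i, Q i ↔ (i:ℕ) < a) (hc' : ∀ i, Q i ↔ (i:ℕ) < a') : a = a' := by
  by_contra hne
  rcases Nat.lt_or_ge a a' with hlt | hlt
  · have h1 : Q ⟨a, by omega⟩ := (hc' _).mpr (by simp only [Fin.val_mk]; omega)
    have h2 := (hc _).mp h1
    simp only [Fin.val_mk] at h2
    omega
  · have h1 : Q ⟨a', by omega⟩ := (hc _).mpr (by simp only [Fin.val_mk]; omega)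
    have h2 := (hc' _).mp h1
    simp only [Fin.val_mk] at h2
    omega

lemma tePhiFun_pos_iff (l : List ℕ) (x : teST l) (i : Fin l.length) :
    0 < tePhiFun l x i ↔ (i:ℕ) < x.1.1.1 := by
  constructor
  · intro hpos
    by_contra hni
    by_cases hib : (i:ℕ) < x.1.1.2
    · rw [tePhiFun_zero l x i hni hib] at hpos
      omega
    · have := tePhiFun_neg l x i hni hib
      omega
  · exact tePhiFun_pos l x i

lemma tePhiFun_nonneg_iff (l : List ℕ) (x : teST l) (i : Fin l.length) :
    0 ≤ tePhiFun l x i ↔ (i:ℕ) < x.1.1.2 := by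
  have hm := mem_tePairs.mp x.1.2
  constructor
  · intro hpos
    by_contra hni
    have hna : ¬ (i:ℕ) < x.1.1.1 := by omega
    have := tePhiFun_neg l x i hna hni
    omega
  · intro hib
    by_cases hia : (i:ℕ) < x.1.1.1
    · exact (tePhiFun_pos l x i hia).le
    · rw [tePhiFun_zero l x i hia hib]

lemma tePhiFun_val_g (l : List ℕ) (x : teST l) (i : Fin l.length)
    (h1 : (i:ℕ) < x.1.1.1) (hpf : (i:ℕ) < (l.take x.1.1.1).length) :
    tePhiFun l x i = (x.2.1.1 ⟨(i:ℕ), hpf⟩ : ℤ) := by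
  rw [tePhiFun, dif_pos h1]

lemma tePhiFun_val_h (l : List ℕ) (x : teST l) (i : Fin l.length)
    (h1 : ¬ (i:ℕ) < x.1.1.1) (h2 : ¬ (i:ℕ) < x.1.1.2)
    (hpf : (i:ℕ) - x.1.1.2 < (l.drop x.1.1.2).length) :
    tePhiFun l x i = x.2.2.1 ⟨(i:ℕ) - x.1.1.2, hpf⟩ := by
  rw [tePhiFun, dif_neg h1, dif_neg h2]

lemma tePhi_bijective (l : List ℕ) : Function.Bijective (tePhi l) := by
  constructor
  · rintro ⟨⟨⟨a, b⟩, hp⟩, g, h⟩ ⟨⟨⟨a', b'⟩, hp'⟩, g', h'⟩ heq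
    set x1 : teST l := ⟨⟨⟨a, b⟩, hp⟩, g, h⟩ with hx1
    set x2 : teST l := ⟨⟨⟨a', b'⟩, hp'⟩, g', h'⟩ with hx2
    have hfun : tePhiFun l x1 = tePhiFun l x2 := congrArg Subtype.val heq
    have hm := mem_tePairs.mp hp
    have hm' := mem_tePairs.mp hp'
    simp only at hm hm'
    have haa : a = a' := by
      apply char_eq_nat (fun i => 0 < tePhiFun l x1 i) hm.2.2.1 hm'.2.2.1
      · exact fun i => tePhiFun_pos_iff l x1 i
      · intro i
        rw [hfun]
        exact tePhiFun_pos_iff l x2 i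
    have hbb : b = b' := by
      apply char_eq_nat (fun i => 0 ≤ tePhiFun l x1 i) hm.2.2.2 hm'.2.2.2
      · exact fun i => tePhiFun_nonneg_iff l x1 i
      · intro i
        rw [hfun]
        exact tePhiFun_nonneg_iff l x2 i
    subst haa
    subst hbb
    have hpp : hp = hp' := rfl
    subst hpp
    have hgg : g = g' := by
      apply Subtype.ext
      funext i
      have hia : (i:ℕ) < a := (take_idx i).1
      have hir : (i:ℕ) < l.length := (take_idx i).2
      have hvi := congrFun hfun ⟨(i:ℕ), hir⟩
      rw [tePhiFun_val_g l x1 ⟨(i:ℕ), hir⟩ hia i.2,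
        tePhiFun_val_g l x2 ⟨(i:ℕ), hir⟩ hia i.2] at hvi
      simp only [Fin.eta, Int.natCast_inj] at hvi
      exact hvi
    have hhh : h = h' := by
      apply Subtype.ext
      funext j
      have hjr : b + (j:ℕ) < l.length := drop_idx j
      have hvi := congrFun hfun ⟨b + (j:ℕ), hjr⟩
      have hna : ¬ ((⟨b + (j:ℕ), hjr⟩ : Fin l.length) : ℕ) < a := by
        simp only [Fin.val_mk]; omega
      have hnb : ¬ ((⟨b + (j:ℕ), hjr⟩ : Fin l.length) : ℕ) < b := by
        simp only [Fin.val_mk]; omega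
      have hpf : ((⟨b + (j:ℕ), hjr⟩ : Fin l.length) : ℕ) - b < (l.drop b).length := by
        simp only [Fin.val_mk]
        have h2 : (l.drop b).length = l.length - b := List.length_drop
        omega
      rw [tePhiFun_val_h l x1 ⟨b + (j:ℕ), hjr⟩ hna hnb hpf,
        tePhiFun_val_h l x2 ⟨b + (j:ℕ), hjr⟩ hna hnb hpf] at hvi
      have hidx : (⟨((⟨b + (j:ℕ), hjr⟩ : Fin l.length) : ℕ) - b, hpf⟩
          : Fin ((l.drop b).length)) = j := by
        apply Fin.ext
        simp only [Fin.val_mk]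
        omega
      rwa [hidx] at hvi
    rw [hx1, hx2, hgg, hhh]
  · rintro ⟨f, hf⟩
    classical
    set A : Finset (Fin l.length) := Finset.univ.filter (fun i => 0 < f i) with hA
    set B : Finset (Fin l.length) := Finset.univ.filter (fun i => 0 ≤ f i) with hB
    have hAmem : ∀ i, i ∈ A ↔ 0 < f i := fun i => by simp [hA]
    have hBmem : ∀ i, i ∈ B ↔ 0 ≤ f i := fun i => by simp [hB]
    have hAdown : ∀ i j : Fin l.length, i ≤ j → j ∈ A → i ∈ A := by
      intro i j hij hj
      rw [hAmem] at hj ⊢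
      rcases eq_or_lt_of_le hij with heq | hlt
      · rw [heq]; exact hj
      · exact lt_trans hj (hf hlt)
    have hBdown : ∀ i j : Fin l.length, i ≤ j → j ∈ B → i ∈ B := by
      intro i j hij hj
      rw [hBmem] at hj ⊢
      rcases eq_or_lt_of_le hij with heq | hlt
      · rw [heq]; exact hj
      · exact le_of_lt (lt_of_le_of_lt hj (hf hlt))
    set a := A.card with ha
    set b := B.card with hb
    have hAc : ∀ i, 0 < f i ↔ (i:ℕ) < a :=
      fun i => (hAmem i).symm.trans (seg_lemma A hAdown i)
    have hBc : ∀ i, 0 ≤ f i ↔ (i:ℕ) < b :=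
      fun i => (hBmem i).symm.trans (seg_lemma B hBdown i)
    have hab : a ≤ b := by
      apply Finset.card_le_card
      intro i hi
      rw [hAmem] at hi
      rw [hBmem]
      exact hi.le
    have har : a ≤ l.length := by simpa using Finset.card_le_univ A
    have hbr : b ≤ l.length := by simpa using Finset.card_le_univ B
    have hba : b ≤ a + 1 := by
      by_contra hcon
      push_neg at hcon
      have h1 : f ⟨a, by omega⟩ = 0 := by
        have hge : 0 ≤ f ⟨a, by omega⟩ := (hBc _).mpr (by simp only [Fin.val_mk]; omega)
        have hnlt : ¬ (0 < f ⟨a, by omega⟩) := by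
          intro hpos
          have := (hAc _).mp hpos
          simp only [Fin.val_mk] at this
          omega
        omega
      have h2 : f ⟨a+1, by omega⟩ = 0 := by
        have hge : 0 ≤ f ⟨a+1, by omega⟩ := (hBc _).mpr (by simp only [Fin.val_mk]; omega)
        have hnlt : ¬ (0 < f ⟨a+1, by omega⟩) := by
          intro hpos
          have := (hAc _).mp hpos
          simp only [Fin.val_mk] at this
          omega
        omega
      have h3 : f ⟨a+1, by omega⟩ < f ⟨a, by omega⟩ := hf (by simp only [Fin.mk_lt_mk]; omega)
      omega
    have hmem : (a, b) ∈ tePairs l := mem_tePairs.mpr ⟨hab, hba, har, hbr⟩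
    refine ⟨⟨⟨(a, b), hmem⟩,
      ⟨fun i => (f ⟨(i:ℕ), (take_idx i).2⟩).toNat, ?_, ?_⟩,
      ⟨fun j => f ⟨b + (j:ℕ), drop_idx j⟩, ?_, ?_⟩⟩, ?_⟩
    · intro i j hij
      simp only
      have hposj : 0 < f ⟨(j:ℕ), (take_idx j).2⟩ :=
        (hAc _).mpr (by simp only [Fin.val_mk]; exact (take_idx j).1)
      have hlt : f ⟨(j:ℕ), (take_idx j).2⟩ < f ⟨(i:ℕ), (take_idx i).2⟩ :=
        hf (by simp only [Fin.mk_lt_mk]; exact hij)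
      omega
    · intro i
      simp only
      have hpos : 0 < f ⟨(i:ℕ), (take_idx i).2⟩ :=
        (hAc _).mpr (by simp only [Fin.val_mk]; exact (take_idx i).1)
      omega
    · intro i j hij
      simp only
      exact hf (by simp only [Fin.mk_lt_mk]; have : (i:ℕ) < (j:ℕ) := hij; omega)
    · intro j
      simp only
      have hnn : ¬ (0 ≤ f ⟨b + (j:ℕ), drop_idx j⟩) := by
        intro hge
        have := (hBc _).mp hge
        simp only [Fin.val_mk] at this
        omega
      omega
    · apply Subtype.ext
      funext i
      show tePhiFun l _ i = f i
      rw [tePhiFun]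
      simp only
      by_cases hia : (i:ℕ) < a
      · rw [dif_pos hia]
        have hpos : 0 < f i := (hAc i).mpr hia
        show ((f ⟨(i:ℕ), i.2⟩).toNat : ℤ) = f i
        rw [Fin.eta]
        exact Int.toNat_of_nonneg hpos.le
      · by_cases hib : (i:ℕ) < b
        · rw [dif_neg hia, dif_pos hib]
          have hge : 0 ≤ f i := (hBc i).mpr hib
          have hnlt : ¬ 0 < f i := fun hpos => hia ((hAc i).mp hpos)
          omega
        · rw [dif_neg hia, dif_neg hib]
          exact congrArg f (Fin.ext (by simp only [Fin.val_mk]; omega))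

lemma head_get (l : List ℕ) (hne : l ≠ []) (h0 : 0 < l.length) : l.get ⟨0, h0⟩ = l.head! := by
  cases l with
  | nil => contradiction
  | cons hd tl => rfl

lemma last_get (l : List ℕ) (hne : l ≠ []) :
    l.get ⟨l.length - 1, by cases l with | nil => exact absurd rfl hne | cons hd tl => simp⟩
      = l.getLast! := by
  have h2 : l.getLast! = l.getLast hne :=
    List.getLast!_of_getLast? (List.getLast?_eq_getLast hne)
  rw [h2, List.getLast_eq_getElem, List.get_eq_getElem]

noncomputable def teA (l : List ℕ) (z : ℂ) (a : ℕ) : PlusT (l.take a) → ℂ :=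
  fun g => ∏ i, (((g.1 i : ℂ) + z) ^ (l.take a).get i)⁻¹

noncomputable def teB (l : List ℕ) (z : ℂ) (b : ℕ) : MinusT (l.drop b) → ℂ :=
  fun h => ∏ i, (((h.1 i : ℂ) + z) ^ (l.drop b).get i)⁻¹

/-- Trifactorization of multitangent functions:
`Te^s = Σ_{s = s¹·s²·s³, l(s²) ≤ 1} He₊^{s¹} · Ce^{s²} · He₋^{s³}`. -/
theorem te_trifactorization (l : List ℕ) (hne : l ≠ [])
    (h1 : ∀ x ∈ l, 1 ≤ x) (hb : 2 ≤ l.head!) (he : 2 ≤ l.getLast!)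
    (z : ℂ) (hz : ∀ n : ℤ, z ≠ (n : ℂ)) :
    Te l z =
      ∑ p ∈ (Finset.range (l.length + 1) ×ˢ Finset.range (l.length + 1)).filter
          (fun p => p.1 ≤ p.2 ∧ p.2 ≤ p.1 + 1),
        HePlus (l.take p.1) z * Ce ((l.drop p.1).take (p.2 - p.1)) z *
          HeMinus (l.drop p.2) z := by
  classical
  -- word conditions for take/drop
  have htake1 : ∀ a : ℕ, ∀ x ∈ l.take a, 1 ≤ x := fun a x hx => h1 x (List.take_subset a l hx)
  have hdrop1 : ∀ b : ℕ, ∀ x ∈ l.drop b, 1 ≤ x := fun b x hx => h1 x (List.drop_subset b l hx)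
  have htakehead : ∀ (a : ℕ) (h0 : 0 < (l.take a).length), 2 ≤ (l.take a).get ⟨0, h0⟩ := by
    intro a h0
    have hlt : 0 < l.length := by
      have := List.length_take (i := a) (l := l)
      omega
    have hgeq : (l.take a).get ⟨0, h0⟩ = l.get ⟨0, hlt⟩ := by
      simp [List.get_eq_getElem, List.getElem_take]
    rw [hgeq, head_get l hne hlt]
    exact hb
  have hdroplast : ∀ (b : ℕ) (h0 : 0 < (l.drop b).length),
      2 ≤ (l.drop b).get ⟨(l.drop b).length - 1, by omega⟩ := by
    intro b h0
    have hlen : (l.drop b).length = l.length - b := List.length_drop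
    have hlt : 0 < l.length := by omega
    have hgeq : (l.drop b).get ⟨(l.drop b).length - 1, by omega⟩
        = l.get ⟨l.length - 1, by omega⟩ := by
      simp only [List.get_eq_getElem, List.getElem_drop]
      congr 1
      omega
    rw [hgeq]
    have := last_get l hne
    rw [this]
    exact he
  -- summability of the three pieces, for each decomposition
  have SA : ∀ a : ℕ, Summable fun g : PlusT (l.take a) => ‖teA l z a g‖ :=
    fun a => summable_plus (l.take a) (htake1 a) (htakehead a) z hz
  have SB : ∀ b : ℕ, Summable fun h : MinusT (l.drop b) => ‖teB l z b h‖ :=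
    fun b => summable_minus (l.drop b) (hdrop1 b) (hdroplast b) z hz
  -- rewrite of summands via the splitting lemma
  have hre : ∀ p : {x : ℕ × ℕ // x ∈ tePairs l},
      ∀ gh : PlusT (l.take p.1.1) × MinusT (l.drop p.1.2),
      (∏ i, (((tePhiFun l ⟨p, gh⟩ i : ℂ) + z) ^ l.get i)⁻¹)
        = teA l z p.1.1 gh.1 * Ce ((l.drop p.1.1).take (p.1.2 - p.1.1)) z * teB l z p.1.2 gh.2 :=
    fun p gh => teSplit l z ⟨p, gh⟩
  -- summability of norms over the sigma type
  have hnormsum : Summable fun x : teST l =>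
      ‖∏ i, (((tePhiFun l x i : ℂ) + z) ^ l.get i)⁻¹‖ := by
    apply (summable_sigma_of_nonneg (fun x => norm_nonneg _)).mpr
    constructor
    · intro p
      have hkey : Summable fun gh : PlusT (l.take p.1.1) × MinusT (l.drop p.1.2) =>
          ‖teA l z p.1.1 gh.1‖ * (‖Ce ((l.drop p.1.1).take (p.1.2 - p.1.1)) z‖ * ‖teB l z p.1.2 gh.2‖) := by
        apply Summable.mul_of_nonneg (SA p.1.1) ((SB p.1.2).mul_left _)
        · exact fun g => norm_nonneg _
        · intro h
          positivity
      apply Summable.congr hkey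
      intro gh
      rw [hre p gh, norm_mul, norm_mul]
      ring
    · exact Summable.of_finite
  have hsum : Summable fun x : teST l =>
      ∏ i, (((tePhiFun l x i : ℂ) + z) ^ l.get i)⁻¹ := hnormsum.of_norm
  -- fiberwise tsum computation
  have fiber_eq : ∀ p : {x : ℕ × ℕ // x ∈ tePairs l},
      (∑' gh : PlusT (l.take p.1.1) × MinusT (l.drop p.1.2),
        ∏ i, (((tePhiFun l ⟨p, gh⟩ i : ℂ) + z) ^ l.get i)⁻¹)
      = HePlus (l.take p.1.1) z * Ce ((l.drop p.1.1).take (p.1.2 - p.1.1)) z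
        * HeMinus (l.drop p.1.2) z := by
    intro p
    set cc := Ce ((l.drop p.1.1).take (p.1.2 - p.1.1)) z with hcc
    have hBsum : Summable (teB l z p.1.2) := (SB p.1.2).of_norm
    have step1 : (∑' gh : PlusT (l.take p.1.1) × MinusT (l.drop p.1.2),
        ∏ i, (((tePhiFun l ⟨p, gh⟩ i : ℂ) + z) ^ l.get i)⁻¹)
        = ∑' gh : PlusT (l.take p.1.1) × MinusT (l.drop p.1.2),
            teA l z p.1.1 gh.1 * cc * teB l z p.1.2 gh.2 :=
      tsum_congr (fun gh => hre p gh)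
    rw [step1]
    have hs2 : Summable fun gh : PlusT (l.take p.1.1) × MinusT (l.drop p.1.2) =>
        teA l z p.1.1 gh.1 * cc * teB l z p.1.2 gh.2 := by
      apply Summable.of_norm
      have hkey : Summable fun gh : PlusT (l.take p.1.1) × MinusT (l.drop p.1.2) =>
          ‖teA l z p.1.1 gh.1‖ * (‖cc‖ * ‖teB l z p.1.2 gh.2‖) := by
        apply Summable.mul_of_nonneg (SA p.1.1) ((SB p.1.2).mul_left _)
        · exact fun g => norm_nonneg _
        · intro h
          positivity
      apply Summable.congr hkey
      intro gh
      rw [norm_mul, norm_mul]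
      ring
    rw [Summable.tsum_prod' hs2 (fun g => hBsum.mul_left (teA l z p.1.1 g * cc))]
    have step2 : ∀ g : PlusT (l.take p.1.1),
        (∑' h : MinusT (l.drop p.1.2), teA l z p.1.1 g * cc * teB l z p.1.2 h)
        = teA l z p.1.1 g * (cc * HeMinus (l.drop p.1.2) z) := by
      intro g
      have : (∑' h : MinusT (l.drop p.1.2), teA l z p.1.1 g * cc * teB l z p.1.2 h)
          = (teA l z p.1.1 g * cc) * ∑' h : MinusT (l.drop p.1.2), teB l z p.1.2 h :=
        tsum_mul_left
      rw [this, mul_assoc]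
      rfl
    rw [tsum_congr step2, tsum_mul_right, ← mul_assoc]
    rfl
  -- assemble
  have hTe : Te l z = ∑' x : teST l,
      ∏ i, (((tePhiFun l x i : ℂ) + z) ^ l.get i)⁻¹ :=
    ((Equiv.ofBijective (tePhi l) (tePhi_bijective l)).tsum_eq
      (fun n : TeT l => ∏ i, (((n.1 i : ℂ) + z) ^ l.get i)⁻¹)).symm
  rw [hTe, Summable.tsum_sigma hsum]
  rw [tsum_fintype]
  calc ∑ p : {x : ℕ × ℕ // x ∈ tePairs l},
        (∑' gh : PlusT (l.take p.1.1) × MinusT (l.drop p.1.2),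
          ∏ i, (((tePhiFun l ⟨p, gh⟩ i : ℂ) + z) ^ l.get i)⁻¹)
      = ∑ p : {x : ℕ × ℕ // x ∈ tePairs l},
          HePlus (l.take p.1.1) z * Ce ((l.drop p.1.1).take (p.1.2 - p.1.1)) z
            * HeMinus (l.drop p.1.2) z :=
        Finset.sum_congr rfl (fun p _ => fiber_eq p)
    _ = ∑ p ∈ tePairs l,
          HePlus (l.take p.1) z * Ce ((l.drop p.1).take (p.2 - p.1)) z
            * HeMinus (l.drop p.2) z :=
        Finset.sum_coe_sort (tePairs l)
          (fun p => HePlus (l.take p.1) z * Ce ((l.drop p.1).take (p.2 - p.1)) z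
            * HeMinus (l.drop p.2) z)
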